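/- An allotment A of an LBDD instance is optimal if and only if A does not induce any negative loop. -/

import Mathlib

open Finset

/-- Cyclic successor on `Fin n`. -/
def cnext {n : ℕ} (t : Fin n) : Fin n := ⟨(t.val + 1) % n, Nat.mod_lt _ t.pos⟩

section LBDD

variable {D S : Type*} [Fintype D] [DecidableEq D] [Fintype S] [DecidableEq S]

/-- Occupancy of a service center `s` under allotment `A`: the number of demand
units assigned to `s`. -/
def occ (A : D → S) (s : S) : ℕ := (Finset.univ.filter fun d => A d = s).card

/-- Total cost of an allotment: assignment costs plus accumulated per-allotment penalties. -/
def cost (CM : D → S → ℤ) (p : S → ℕ → ℤ) (A : D → S) : ℤ :=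
  (∑ d, CM d (A d)) + ∑ s, ∑ j ∈ Finset.Icc 1 (occ A s), p s j

/-- Weight of the penalty transfer edge from `si` to `sj` under allotment `A`. -/
def wpen (p : S → ℕ → ℤ) (A : D → S) (si sj : S) : ℤ :=
  p si (occ A si + 1) - p sj (occ A sj)

/-- A loop: a cyclic sequence of `m` edges; edge `t` is directed from `vtx t` to
`vtx (cnext t)`; if `dem t = some d` it is a transfer edge moving demand unit `d`,
and if `dem t = none` it is a penalty transfer edge. -/
structure Loop (S D : Type*) where
  m : ℕ
  vtx : Fin m → S
  dem : Fin m → Option D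

/-- `L` is a loop of allotment `A`: at least two pairwise distinct service centers,
each transfer edge moves a demand unit currently assigned to its tail, the demand
units are pairwise distinct, and there is at most one penalty transfer edge
(no penalty edge: type (i), a cycle of transfer edges; one penalty edge: type (ii),
a path of transfer edges closed by a penalty transfer edge). -/
def IsLoop (A : D → S) (L : Loop S D) : Prop :=
  2 ≤ L.m ∧ Function.Injective L.vtx ∧
  (∀ t d, L.dem t = some d → A d = L.vtx t) ∧
  (∀ t t' d, L.dem t = some d → L.dem t' = some d → t = t') ∧
  (∀ t t', L.dem t = none → L.dem t' = none → t = t')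

/-- Weight of edge `t` of loop `L`. -/
def edgeWt (CM : D → S → ℤ) (p : S → ℕ → ℤ) (A : D → S) (L : Loop S D) (t : Fin L.m) : ℤ :=
  match L.dem t with
  | some d => CM d (L.vtx (cnext t)) - CM d (L.vtx t)
  | none => wpen p A (L.vtx t) (L.vtx (cnext t))

/-- Cost of a loop: the sum of the weights of its edges. -/
def loopCost (CM : D → S → ℤ) (p : S → ℕ → ℤ) (A : D → S) (L : Loop S D) : ℤ :=
  ∑ t, edgeWt CM p A L t

/-- `A` induces a negative loop. -/
def InducesNegLoop (CM : D → S → ℤ) (p : S → ℕ → ℤ) (A : D → S) : Prop :=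
  ∃ L : Loop S D, IsLoop A L ∧ loopCost CM p A L < 0

/-- Removing a loop from `A`: for each transfer edge, reassign its demand unit
from the tail to the head of the edge. -/
noncomputable def removeLoop (A : D → S) (L : Loop S D) : D → S := fun x =>
  if h : ∃ t, L.dem t = some x then L.vtx (cnext (Classical.choose h)) else A x

end LBDD

set_option linter.unusedSectionVars false

section Aux2
variable {D S : Type*} [Fintype D] [DecidableEq D] [Fintype S] [DecidableEq S]


lemma edgeWt_some (CM : D → S → ℤ) (p : S → ℕ → ℤ) (A : D → S) (L : Loop S D)
    (t : Fin L.m) (d : D) (h : L.dem t = some d) :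
    edgeWt CM p A L t = CM d (L.vtx (cnext t)) - CM d (L.vtx t) := by
  unfold edgeWt; rw [h]

lemma edgeWt_none (CM : D → S → ℤ) (p : S → ℕ → ℤ) (A : D → S) (L : Loop S D)
    (t : Fin L.m) (h : L.dem t = none) :
    edgeWt CM p A L t = wpen p A (L.vtx t) (L.vtx (cnext t)) := by
  unfold edgeWt; rw [h]

def pen (p : S → ℕ → ℤ) (s : S) (n : ℕ) : ℤ := ∑ j ∈ Finset.Icc 1 n, p s j

lemma pen_succ (p : S → ℕ → ℤ) (s : S) (n : ℕ) :
    pen p s (n + 1) = pen p s n + p s (n + 1) :=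
  Finset.sum_Icc_succ_top (by omega) _

lemma occ_split (C : D → S) (E : Finset D) (s : S) :
    occ C s = (E.filter fun d => C d = s).card + (Eᶜ.filter fun d => C d = s).card := by
  unfold occ
  rw [← Finset.card_union_of_disjoint (Finset.disjoint_filter_filter (disjoint_compl_right)),
    ← Finset.filter_union, Finset.union_compl]

lemma occ_diff (B B' : D → S) (E : Finset D) (h : ∀ d ∉ E, B d = B' d) (s : S) :
    (occ B' s : ℤ) - occ B s
      = (E.filter fun d => B' d = s).card - (E.filter fun d => B d = s).card := by
  rw [occ_split B' E s, occ_split B E s]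
  have : (Eᶜ.filter fun d => B d = s) = (Eᶜ.filter fun d => B' d = s) := by
    apply Finset.filter_congr
    intro d hd
    rw [h d (by simpa using hd)]
  rw [this]; push_cast; ring

lemma cm_diff (CM : D → S → ℤ) (B B' : D → S) (E : Finset D) (h : ∀ d ∉ E, B d = B' d) :
    (∑ d, CM d (B d)) - ∑ d, CM d (B' d) = ∑ d ∈ E, (CM d (B d) - CM d (B' d)) := by
  rw [← Finset.sum_sub_distrib]
  refine (Finset.sum_subset (Finset.subset_univ E) ?_).symm
  intro d _ hd
  rw [h d hd]; ring

lemma count_inj (f : ℕ → S) (n : ℕ) (hinj : ∀ i < n, ∀ j < n, f i = f j → i = j) (s : S) :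
    ((Finset.range n).filter fun i => f i = s).card = if ∃ j < n, f j = s then 1 else 0 := by
  split_ifs with h
  · obtain ⟨j, hj, hfj⟩ := h
    have : ((Finset.range n).filter fun i => f i = s) = {j} := by
      ext i
      simp only [Finset.mem_filter, Finset.mem_range, Finset.mem_singleton]
      constructor
      · rintro ⟨hi, hfi⟩; exact hinj i hi j hj (hfi.trans hfj.symm)
      · rintro rfl; exact ⟨hj, hfj⟩
    rw [this, Finset.card_singleton]
  · rw [Finset.filter_false_of_mem, Finset.card_empty]
    intro i hi hfi
    exact h ⟨i, Finset.mem_range.mp hi, hfi⟩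

def costX (CM : D → S → ℤ) (p : S → ℕ → ℤ) (A : D → S) : ℤ :=
  (∑ d, CM d (A d)) + ∑ s, pen p s (occ A s)

/-- A chain for the pair (A,B): a simple path of transfer moves. -/
structure Chain (A B : D → S) where
  k : ℕ
  hk : 1 ≤ k
  dm : ℕ → D
  v : ℕ → S
  hvinj : ∀ i ≤ k, ∀ j ≤ k, v i = v j → i = j
  hA : ∀ i < k, A (dm i) = v i
  hB : ∀ i < k, B (dm i) = v (i + 1)

/-- A cycle for the pair (A,B). -/
structure Cyc (A B : D → S) where
  k : ℕ
  hk : 2 ≤ k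
  dm : ℕ → D
  v : ℕ → S
  hvinj : ∀ i < k, ∀ j < k, v i = v j → i = j
  hA : ∀ i < k, A (dm i) = v i
  hB : ∀ i < k, B (dm i) = v ((i + 1) % k)

namespace Chain
variable {A B : D → S} (C : Chain A B)

lemma dm_inj : ∀ i < C.k, ∀ j < C.k, C.dm i = C.dm j → i = j := by
  intro i hi j hj h
  have h2 : C.v i = C.v j := by rw [← C.hA i hi, ← C.hA j hj, h]
  exact C.hvinj i hi.le j hj.le h2

def E : Finset D := (Finset.range C.k).image C.dm

noncomputable def revert : D → S := fun d => if d ∈ C.E then A d else B d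

lemma revert_eq_off : ∀ d ∉ C.E, B d = C.revert d := by
  intro d hd; simp [revert, hd]

lemma mem_E_iff (d : D) : d ∈ C.E ↔ ∃ i < C.k, C.dm i = d := by
  simp [E]

lemma filter_E_card (P : D → Prop) [DecidablePred P] :
    (C.E.filter P).card = ((Finset.range C.k).filter fun i => P (C.dm i)).card := by
  unfold E
  rw [Finset.filter_image]
  apply Finset.card_image_of_injOn
  intro i hi j hj h
  simp only [Finset.coe_filter, Set.mem_setOf_eq, Finset.mem_range] at hi hj
  exact C.dm_inj i hi.1 j hj.1 h

lemma occ_revert (s : S) :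
    (occ C.revert s : ℤ) = occ B s + (if s = C.v 0 then 1 else 0)
      - (if s = C.v C.k then 1 else 0) := by
  have h := occ_diff B C.revert C.E C.revert_eq_off s
  have e1 : (C.E.filter fun d => C.revert d = s) = (C.E.filter fun d => A d = s) := by
    apply Finset.filter_congr; intro d hd; simp [revert, hd]
  rw [e1, C.filter_E_card (fun d => A d = s), C.filter_E_card (fun d => B d = s)] at h
  have e2 : ((Finset.range C.k).filter fun i => A (C.dm i) = s)
      = ((Finset.range C.k).filter fun i => C.v i = s) := by
    apply Finset.filter_congr; intro i hi
    rw [C.hA i (Finset.mem_range.mp hi)]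
  have e3 : ((Finset.range C.k).filter fun i => B (C.dm i) = s)
      = ((Finset.range C.k).filter fun i => C.v (i + 1) = s) := by
    apply Finset.filter_congr; intro i hi
    rw [C.hB i (Finset.mem_range.mp hi)]
  rw [e2, e3, count_inj C.v C.k (fun i hi j hj => C.hvinj i hi.le j hj.le),
    count_inj (fun i => C.v (i+1)) C.k (fun i hi j hj h => by
      have := C.hvinj (i+1) (by omega) (j+1) (by omega) h; omega)] at h
  have hk1 := C.hk
  have h0k : C.v 0 ≠ C.v C.k := fun he => by
    have := C.hvinj 0 (by omega) C.k le_rfl he; omega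
  by_cases hmid : ∃ j, 0 < j ∧ j < C.k ∧ C.v j = s
  · obtain ⟨j, hj0, hjk, hvj⟩ := hmid
    have h0 : ¬ (s = C.v 0) := fun he => by
      have := C.hvinj j hjk.le 0 (by omega) (hvj.trans he); omega
    have hkk : ¬ (s = C.v C.k) := fun he => by
      have := C.hvinj j hjk.le C.k le_rfl (hvj.trans he); omega
    have e1 : (∃ j < C.k, C.v j = s) := ⟨j, hjk, hvj⟩
    have e2 : (∃ j < C.k, C.v (j + 1) = s) := ⟨j - 1, by omega, by
      have : j - 1 + 1 = j := by omega
      rw [this]; exact hvj⟩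
    rw [if_pos e1, if_pos e2] at h
    rw [if_neg h0, if_neg hkk]
    omega
  · by_cases h0 : s = C.v 0
    · have hkk : ¬ (s = C.v C.k) := h0 ▸ h0k
      have e1 : ∃ j < C.k, C.v j = s := ⟨0, by omega, h0.symm⟩
      have e2 : ¬ ∃ j < C.k, C.v (j + 1) = s := by
        rintro ⟨j, hj, hvj⟩
        have := C.hvinj (j + 1) (by omega) 0 (by omega) (hvj.trans h0)
        omega
      rw [if_pos e1, if_neg e2] at h
      rw [if_pos h0, if_neg hkk]
      omega
    · by_cases hkk : s = C.v C.k
      · have e1 : ¬ ∃ j < C.k, C.v j = s := by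
          rintro ⟨j, hj, hvj⟩
          have := C.hvinj j hj.le C.k le_rfl (hvj.trans hkk)
          omega
        have e2 : ∃ j < C.k, C.v (j + 1) = s := ⟨C.k - 1, by have := C.hk; omega, by
          have : C.k - 1 + 1 = C.k := by have := C.hk; omega
          rw [this]; exact hkk.symm⟩
        rw [if_neg e1, if_pos e2] at h
        rw [if_neg h0, if_pos hkk]
        omega
      · have e1 : ¬ ∃ j < C.k, C.v j = s := by
          rintro ⟨j, hj, hvj⟩
          rcases Nat.eq_zero_or_pos j with rfl | hjp
          · exact h0 hvj.symm
          · exact hmid ⟨j, hjp, hj, hvj⟩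
        have e2 : ¬ ∃ j < C.k, C.v (j + 1) = s := by
          rintro ⟨j, hj, hvj⟩
          rcases Nat.lt_or_ge (j + 1) C.k with hlt | hge
          · exact hmid ⟨j + 1, by omega, hlt, hvj⟩
          · have : j + 1 = C.k := by omega
            exact hkk (this ▸ hvj).symm
        rw [if_neg e1, if_neg e2] at h
        rw [if_neg h0, if_neg hkk]
        omega

lemma occ_revert_v0 : occ C.revert (C.v 0) = occ B (C.v 0) + 1 := by
  have h := C.occ_revert (C.v 0)
  have h0k : C.v 0 ≠ C.v C.k := fun he => by
    have hk1 := C.hk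
    have := C.hvinj 0 (by omega) C.k le_rfl he; omega
  rw [if_pos rfl, if_neg h0k] at h
  omega

lemma occ_revert_vk : occ B (C.v C.k) = occ C.revert (C.v C.k) + 1 := by
  have h := C.occ_revert (C.v C.k)
  have h0k : C.v C.k ≠ C.v 0 := fun he => by
    have hk1 := C.hk
    have := C.hvinj C.k le_rfl 0 (by omega) he; omega
  rw [if_pos rfl, if_neg h0k] at h
  omega

lemma occ_revert_other (s : S) (h0 : s ≠ C.v 0) (hk : s ≠ C.v C.k) :
    occ C.revert s = occ B s := by
  have h := C.occ_revert s
  rw [if_neg h0, if_neg hk] at h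
  omega

lemma pen_diff (p : S → ℕ → ℤ) :
    (∑ s, pen p s (occ B s)) - ∑ s, pen p s (occ C.revert s)
      = p (C.v C.k) (occ B (C.v C.k)) - p (C.v 0) (occ B (C.v 0) + 1) := by
  have h0k : C.v 0 ≠ C.v C.k := fun he => by
    have hk1 := C.hk
    have := C.hvinj 0 (by omega) C.k le_rfl he; omega
  rw [← Finset.sum_sub_distrib]
  rw [← Finset.sum_subset (Finset.subset_univ ({C.v 0, C.v C.k} : Finset S)) (by
    intro s _ hs
    simp only [Finset.mem_insert, Finset.mem_singleton, not_or] at hs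
    rw [C.occ_revert_other s hs.1 hs.2]
    ring)]
  rw [Finset.sum_pair h0k]
  rw [C.occ_revert_v0, C.occ_revert_vk, pen_succ, pen_succ]
  ring

lemma chain_cost (CM : D → S → ℤ) (p : S → ℕ → ℤ) :
    costX CM p B = costX CM p C.revert
      + (∑ i ∈ Finset.range C.k, (CM (C.dm i) (C.v (i + 1)) - CM (C.dm i) (C.v i)))
      + p (C.v C.k) (occ B (C.v C.k)) - p (C.v 0) (occ B (C.v 0) + 1) := by
  have h1 := cm_diff CM B C.revert C.E C.revert_eq_off
  rw [Chain.E, Finset.sum_image (fun i hi j hj h =>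
    C.dm_inj i (Finset.mem_range.mp hi) j (Finset.mem_range.mp hj) h)] at h1
  have h2 : ∀ i ∈ Finset.range C.k,
      CM (C.dm i) (B (C.dm i)) - CM (C.dm i) (C.revert (C.dm i))
        = CM (C.dm i) (C.v (i + 1)) - CM (C.dm i) (C.v i) := by
    intro i hi
    have hi' := Finset.mem_range.mp hi
    have hmem : C.dm i ∈ C.E := (C.mem_E_iff (C.dm i)).mpr ⟨i, hi', rfl⟩
    rw [C.hB i hi', Chain.revert, if_pos hmem, C.hA i hi']
  rw [Finset.sum_congr rfl h2] at h1
  have h3 := C.pen_diff p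
  unfold costX
  linarith

def loop : Loop S D :=
  ⟨C.k + 1, fun t => C.v t.val, fun t => if t.val < C.k then some (C.dm t.val) else none⟩

lemma loop_isLoop : IsLoop A C.loop := by
  have hk1 := C.hk
  refine ⟨by simpa [loop] using by omega, ?_, ?_, ?_, ?_⟩
  · intro t t' h
    have ht : t.val < C.k + 1 := t.isLt
    have ht' : t'.val < C.k + 1 := t'.isLt
    exact Fin.ext (C.hvinj t.val (by omega) t'.val (by omega) h)
  · intro t d hd
    simp only [loop] at hd ⊢
    split at hd
    · next h => rw [← Option.some_inj.mp hd] at *; exact C.hA t.val h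
    · exact absurd hd (by simp)
  · intro t t' d hd hd'
    simp only [loop] at hd hd'
    split at hd
    · next h =>
      split at hd'
      · next h' =>
        exact Fin.ext (C.dm_inj t.val h t'.val h'
          ((Option.some_inj.mp hd).trans (Option.some_inj.mp hd').symm))
      · exact absurd hd' (by simp)
    · exact absurd hd (by simp)
  · intro t t' hd hd'
    simp only [loop] at hd hd'
    split at hd
    · exact absurd hd (by simp)
    · next h =>
      split at hd'
      · exact absurd hd' (by simp)
      · next h' =>
        have ht : t.val < C.k + 1 := t.isLt
        have ht' : t'.val < C.k + 1 := t'.isLt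
        exact Fin.ext (by omega)

lemma loop_cost (CM : D → S → ℤ) (p : S → ℕ → ℤ) :
    loopCost CM p A C.loop
      = (∑ i ∈ Finset.range C.k, (CM (C.dm i) (C.v (i + 1)) - CM (C.dm i) (C.v i)))
        + (p (C.v C.k) (occ A (C.v C.k) + 1) - p (C.v 0) (occ A (C.v 0))) := by
  have hk1 := C.hk
  set g : ℕ → ℤ := fun i =>
    if i < C.k then CM (C.dm i) (C.v (i + 1)) - CM (C.dm i) (C.v i)
    else p (C.v C.k) (occ A (C.v C.k) + 1) - p (C.v 0) (occ A (C.v 0)) with hg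
  have hit : ∀ t : Fin C.loop.m, edgeWt CM p A C.loop t = g t.val := by
    intro t
    have ht : t.val < C.k + 1 := t.isLt
    by_cases h : t.val < C.k
    · have hd : C.loop.dem t = some (C.dm t.val) := by simp [loop, h]
      rw [edgeWt_some CM p A C.loop t _ hd, hg]
      have hcn : (cnext t).val = t.val + 1 := by
        show (t.val + 1) % C.loop.m = t.val + 1
        have hm : C.loop.m = C.k + 1 := rfl
        exact Nat.mod_eq_of_lt (by omega)
      have : C.loop.vtx (cnext t) = C.v (t.val + 1) := by
        show C.v (cnext t).val = _
        rw [hcn]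
      rw [this]
      simp [loop, h]
    · have htk : t.val = C.k := by omega
      have hd : C.loop.dem t = none := by simp [loop, h]
      rw [edgeWt_none CM p A C.loop t hd]
      have hcn : (cnext t).val = 0 := by
        show (t.val + 1) % C.loop.m = 0
        have hm : C.loop.m = C.k + 1 := rfl
        rw [show t.val + 1 = C.loop.m by omega]
        exact Nat.mod_self _
      have h1 : C.loop.vtx (cnext t) = C.v 0 := by
        show C.v (cnext t).val = _
        rw [hcn]
      have h2 : C.loop.vtx t = C.v C.k := by
        show C.v t.val = _
        rw [htk]
      rw [h1, h2, hg]
      simp only [htk, if_neg (lt_irrefl C.k)]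
      rfl
  unfold loopCost
  rw [Finset.sum_congr rfl (fun t _ => hit t)]
  show (∑ t : Fin (C.k + 1), g t.val) = _
  rw [Fin.sum_univ_eq_sum_range g (C.k + 1), Finset.sum_range_succ]
  have : ∀ i ∈ Finset.range C.k, g i = CM (C.dm i) (C.v (i + 1)) - CM (C.dm i) (C.v i) := by
    intro i hi
    rw [hg]
    simp [Finset.mem_range.mp hi]
  rw [Finset.sum_congr rfl this, hg]
  simp

end Chain
namespace Cyc
variable {A B : D → S} (C : Cyc A B)

lemma dm_inj : ∀ i < C.k, ∀ j < C.k, C.dm i = C.dm j → i = j := by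
  intro i hi j hj h
  have h2 : C.v i = C.v j := by rw [← C.hA i hi, ← C.hA j hj, h]
  exact C.hvinj i hi j hj h2

def E : Finset D := (Finset.range C.k).image C.dm

noncomputable def revert : D → S := fun d => if d ∈ C.E then A d else B d

lemma revert_eq_off : ∀ d ∉ C.E, B d = C.revert d := by
  intro d hd; simp [revert, hd]

lemma mem_E_iff (d : D) : d ∈ C.E ↔ ∃ i < C.k, C.dm i = d := by
  simp [E]

lemma filter_E_card (P : D → Prop) [DecidablePred P] :
    (C.E.filter P).card = ((Finset.range C.k).filter fun i => P (C.dm i)).card := by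
  unfold E
  rw [Finset.filter_image]
  apply Finset.card_image_of_injOn
  intro i hi j hj h
  simp only [Finset.coe_filter, Set.mem_setOf_eq, Finset.mem_range] at hi hj
  exact C.dm_inj i hi.1 j hj.1 h

lemma succ_mod_inj : ∀ i < C.k, ∀ j < C.k, (i + 1) % C.k = (j + 1) % C.k → i = j := by
  intro i hi j hj h
  have h2 : i % C.k = j % C.k := Nat.ModEq.add_right_cancel' 1 h
  rw [Nat.mod_eq_of_lt hi, Nat.mod_eq_of_lt hj] at h2
  exact h2

lemma occ_revert (s : S) : occ C.revert s = occ B s := by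
  have hk1 := C.hk
  have h := occ_diff B C.revert C.E C.revert_eq_off s
  have e1 : (C.E.filter fun d => C.revert d = s) = (C.E.filter fun d => A d = s) := by
    apply Finset.filter_congr; intro d hd; simp [revert, hd]
  rw [e1, C.filter_E_card (fun d => A d = s), C.filter_E_card (fun d => B d = s)] at h
  have e2 : ((Finset.range C.k).filter fun i => A (C.dm i) = s)
      = ((Finset.range C.k).filter fun i => C.v i = s) := by
    apply Finset.filter_congr; intro i hi
    rw [C.hA i (Finset.mem_range.mp hi)]
  have e3 : ((Finset.range C.k).filter fun i => B (C.dm i) = s)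
      = ((Finset.range C.k).filter fun i => C.v ((i + 1) % C.k) = s) := by
    apply Finset.filter_congr; intro i hi
    rw [C.hB i (Finset.mem_range.mp hi)]
  rw [e2, e3, count_inj C.v C.k C.hvinj,
    count_inj (fun i => C.v ((i + 1) % C.k)) C.k (fun i hi j hj h => by
      exact C.succ_mod_inj i hi j hj
        (C.hvinj _ (Nat.mod_lt _ (by omega)) _ (Nat.mod_lt _ (by omega)) h))] at h
  have hiff : (∃ j < C.k, C.v j = s) ↔ (∃ j < C.k, C.v ((j + 1) % C.k) = s) := by
    constructor
    · rintro ⟨j, hj, hvj⟩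
      refine ⟨(j + (C.k - 1)) % C.k, Nat.mod_lt _ (by omega), ?_⟩
      have : ((j + (C.k - 1)) % C.k + 1) % C.k = j := by
        rw [Nat.mod_add_mod]
        have : j + (C.k - 1) + 1 = j + C.k := by omega
        rw [this, Nat.add_mod_right, Nat.mod_eq_of_lt hj]
      rw [this]; exact hvj
    · rintro ⟨j, hj, hvj⟩
      exact ⟨(j + 1) % C.k, Nat.mod_lt _ (by omega), hvj⟩
  by_cases he : ∃ j < C.k, C.v j = s
  · rw [if_pos he, if_pos (hiff.mp he)] at h
    omega
  · rw [if_neg he, if_neg (fun hc => he (hiff.mpr hc))] at h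
    omega

lemma cyc_cost (CM : D → S → ℤ) (p : S → ℕ → ℤ) :
    costX CM p B = costX CM p C.revert
      + ∑ i ∈ Finset.range C.k, (CM (C.dm i) (C.v ((i + 1) % C.k)) - CM (C.dm i) (C.v i)) := by
  have h1 := cm_diff CM B C.revert C.E C.revert_eq_off
  rw [Cyc.E, Finset.sum_image (fun i hi j hj h =>
    C.dm_inj i (Finset.mem_range.mp hi) j (Finset.mem_range.mp hj) h)] at h1
  have h2 : ∀ i ∈ Finset.range C.k,
      CM (C.dm i) (B (C.dm i)) - CM (C.dm i) (C.revert (C.dm i))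
        = CM (C.dm i) (C.v ((i + 1) % C.k)) - CM (C.dm i) (C.v i) := by
    intro i hi
    have hi' := Finset.mem_range.mp hi
    have hmem : C.dm i ∈ C.E := (C.mem_E_iff (C.dm i)).mpr ⟨i, hi', rfl⟩
    rw [C.hB i hi', Cyc.revert, if_pos hmem, C.hA i hi']
  rw [Finset.sum_congr rfl h2] at h1
  have h3 : ∀ s, occ C.revert s = occ B s := C.occ_revert
  unfold costX
  have h4 : ∑ s, pen p s (occ C.revert s) = ∑ s, pen p s (occ B s) := by
    apply Finset.sum_congr rfl; intro s _; rw [h3 s]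
  linarith

def loop : Loop S D := ⟨C.k, fun t => C.v t.val, fun t => some (C.dm t.val)⟩

lemma loop_isLoop : IsLoop A C.loop := by
  have hk1 := C.hk
  refine ⟨hk1, ?_, ?_, ?_, ?_⟩
  · intro t t' h
    exact Fin.ext (C.hvinj t.val t.isLt t'.val t'.isLt h)
  · intro t d hd
    simp only [loop] at hd ⊢
    rw [← Option.some_inj.mp hd] at *
    exact C.hA t.val t.isLt
  · intro t t' d hd hd'
    simp only [loop] at hd hd'
    exact Fin.ext (C.dm_inj t.val t.isLt t'.val t'.isLt
      ((Option.some_inj.mp hd).trans (Option.some_inj.mp hd').symm))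
  · intro t t' hd _
    simp [loop] at hd

lemma loop_cost (CM : D → S → ℤ) (p : S → ℕ → ℤ) :
    loopCost CM p A C.loop
      = ∑ i ∈ Finset.range C.k, (CM (C.dm i) (C.v ((i + 1) % C.k)) - CM (C.dm i) (C.v i)) := by
  have hk1 := C.hk
  set g : ℕ → ℤ := fun i => CM (C.dm i) (C.v ((i + 1) % C.k)) - CM (C.dm i) (C.v i) with hg
  have hit : ∀ t : Fin C.loop.m, edgeWt CM p A C.loop t = g t.val := by
    intro t
    have hd : C.loop.dem t = some (C.dm t.val) := rfl
    rw [edgeWt_some CM p A C.loop t _ hd, hg]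
    have h2 : C.loop.vtx (cnext t) = C.v ((t.val + 1) % C.k) := rfl
    rw [h2]
    rfl
  unfold loopCost
  rw [Finset.sum_congr rfl (fun t _ => hit t)]
  show (∑ t : Fin C.k, g t.val) = _
  exact Fin.sum_univ_eq_sum_range g C.k

end Cyc

end Aux2

section Extract
variable {D S : Type*} [Fintype D] [DecidableEq D] [Fintype S] [DecidableEq S]
variable (A B : D → S)

def Good : Prop :=
  Nonempty (Cyc A B) ∨ ∃ C : Chain A B,
    occ B (C.v 0) < occ A (C.v 0) ∧ occ A (C.v C.k) < occ B (C.v C.k)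

variable {A B}

lemma chain_card (C : Chain A B) : C.k + 1 ≤ Fintype.card S := by
  have h : (Finset.range (C.k + 1)).card ≤ (Finset.univ : Finset S).card :=
    Finset.card_le_card_of_injOn C.v (fun i _ => Finset.mem_univ _)
      (fun i hi j hj h => C.hvinj i (by
          simp only [Finset.coe_range, Set.mem_Iio] at hi; omega)
        j (by simp only [Finset.coe_range, Set.mem_Iio] at hj; omega) h)
  simpa using h

lemma exists_fwd (C : Chain A B) (hend : occ B (C.v C.k) ≤ occ A (C.v C.k)) :
    ∃ d', A d' ≠ B d' ∧ A d' = C.v C.k ∧ ∀ i < C.k, C.dm i ≠ d' := by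
  have hk1 := C.hk
  set w := C.v C.k with hw
  set M : Finset D := Finset.univ.filter fun d => A d ≠ B d with hM
  have hMoff : ∀ d ∉ M, B d = A d := by
    intro d hd
    simp only [hM, Finset.mem_filter, Finset.mem_univ, true_and, not_not] at hd
    exact hd.symm
  have h := occ_diff B A M hMoff w
  have hmem : C.dm (C.k - 1) ∈ M.filter fun d => B d = w := by
    have h1 : B (C.dm (C.k - 1)) = w := by
      rw [C.hB (C.k - 1) (by omega), hw, show C.k - 1 + 1 = C.k from by omega]
    have h2 : A (C.dm (C.k - 1)) ≠ B (C.dm (C.k - 1)) := by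
      rw [C.hA (C.k - 1) (by omega), h1, hw]
      intro he
      have := C.hvinj (C.k - 1) (by omega) C.k le_rfl he
      omega
    simp only [hM, Finset.mem_filter, Finset.mem_univ, true_and]
    exact ⟨h2, h1⟩
  have hpos : 0 < (M.filter fun d => B d = w).card := Finset.card_pos.mpr ⟨_, hmem⟩
  have hcast : (occ B w : ℤ) ≤ occ A w := by exact_mod_cast hend
  have hApos : 0 < (M.filter fun d => A d = w).card := by omega
  obtain ⟨d', hd'⟩ := Finset.card_pos.mp hApos
  simp only [hM, Finset.mem_filter, Finset.mem_univ, true_and] at hd'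
  refine ⟨d', hd'.1, hd'.2, fun i hi he => ?_⟩
  have : C.v i = w := by rw [← C.hA i hi, he, hd'.2]
  have := C.hvinj i hi.le C.k le_rfl (this.trans hw.symm ▸ this)
  omega

lemma exists_bwd (C : Chain A B) (hstart : occ A (C.v 0) ≤ occ B (C.v 0)) :
    ∃ d', A d' ≠ B d' ∧ B d' = C.v 0 ∧ ∀ i < C.k, C.dm i ≠ d' := by
  have hk1 := C.hk
  set w := C.v 0 with hw
  set M : Finset D := Finset.univ.filter fun d => A d ≠ B d with hM
  have hMoff : ∀ d ∉ M, B d = A d := by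
    intro d hd
    simp only [hM, Finset.mem_filter, Finset.mem_univ, true_and, not_not] at hd
    exact hd.symm
  have h := occ_diff B A M hMoff w
  have hmem : C.dm 0 ∈ M.filter fun d => A d = w := by
    have h1 : A (C.dm 0) = w := C.hA 0 (by omega)
    have h2 : A (C.dm 0) ≠ B (C.dm 0) := by
      rw [h1, C.hB 0 (by omega)]
      intro he
      have := C.hvinj 0 (by omega) 1 (by omega) (hw ▸ he)
      omega
    simp only [hM, Finset.mem_filter, Finset.mem_univ, true_and]
    exact ⟨h2, h1⟩
  have hpos : 0 < (M.filter fun d => A d = w).card := Finset.card_pos.mpr ⟨_, hmem⟩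
  have hcast : (occ A w : ℤ) ≤ occ B w := by exact_mod_cast hstart
  have hBpos : 0 < (M.filter fun d => B d = w).card := by omega
  obtain ⟨d', hd'⟩ := Finset.card_pos.mp hBpos
  simp only [hM, Finset.mem_filter, Finset.mem_univ, true_and] at hd'
  refine ⟨d', hd'.1, hd'.2, fun i hi he => ?_⟩
  have : C.v (i + 1) = w := by rw [← C.hB i hi, he, hd'.2]
  have := C.hvinj (i + 1) (by omega) 0 (by omega) this
  omega

lemma step_fwd (C : Chain A B) (hend : occ B (C.v C.k) ≤ occ A (C.v C.k)) :
    Good A B ∨ ∃ C' : Chain A B, C'.k = C.k + 1 := by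
  have hk1 := C.hk
  obtain ⟨d', hd'M, hd'A, hd'new⟩ := exists_fwd C hend
  by_cases hcyc : ∃ j ≤ C.k, C.v j = B d'
  · left; left
    obtain ⟨j, hj, hvj⟩ := hcyc
    have hjk : j < C.k := by
      rcases eq_or_lt_of_le hj with rfl | h
      · exact absurd (hd'A.trans hvj) hd'M
      · exact h
    refine ⟨⟨C.k - j + 1, by omega,
      (fun i => if i < C.k - j then C.dm (j + i) else d'),
      (fun i => C.v (j + i)), ?_, ?_, ?_⟩⟩
    · intro i hi i' hi' h
      have := C.hvinj (j + i) (by omega) (j + i') (by omega) h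
      omega
    · intro i hi
      by_cases h : i < C.k - j
      · rw [if_pos h]
        exact C.hA (j + i) (by omega)
      · rw [if_neg h, hd'A, show j + i = C.k from by omega]
    · intro i hi
      by_cases h : i < C.k - j
      · rw [if_pos h, C.hB (j + i) (by omega),
          Nat.mod_eq_of_lt (show i + 1 < C.k - j + 1 from by omega),
          show j + (i + 1) = j + i + 1 from by omega]
      · have hie : i = C.k - j := by omega
        rw [if_neg h, show (i + 1) % (C.k - j + 1) = 0 from by
          rw [hie]; exact Nat.mod_self _]
        rw [Nat.add_zero]
        exact hvj.symm
  · right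
    refine ⟨⟨C.k + 1, by omega,
      (fun i => if i = C.k then d' else C.dm i),
      (fun i => if i = C.k + 1 then B d' else C.v i), ?_, ?_, ?_⟩, rfl⟩
    · intro i hi i' hi' h
      by_cases h1 : i = C.k + 1 <;> by_cases h2 : i' = C.k + 1
      · omega
      · rw [if_pos h1, if_neg h2] at h
        exact absurd ⟨i', by omega, h.symm⟩ hcyc
      · rw [if_neg h1, if_pos h2] at h
        exact absurd ⟨i, by omega, h⟩ hcyc
      · rw [if_neg h1, if_neg h2] at h
        exact C.hvinj i (by omega) i' (by omega) h
    · intro i hi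
      by_cases h : i = C.k
      · rw [if_pos h, if_neg (by omega : ¬ i = C.k + 1), hd'A, h]
      · rw [if_neg h, if_neg (by omega : ¬ i = C.k + 1)]
        exact C.hA i (by omega)
    · intro i hi
      by_cases h : i = C.k
      · rw [if_pos h, if_pos (by omega : i + 1 = C.k + 1)]
      · rw [if_neg h, if_neg (by omega : ¬ i + 1 = C.k + 1)]
        exact C.hB i (by omega)

lemma step_bwd (C : Chain A B) (hstart : occ A (C.v 0) ≤ occ B (C.v 0)) :
    Good A B ∨ ∃ C' : Chain A B, C'.k = C.k + 1 := by
  have hk1 := C.hk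
  obtain ⟨d', hd'M, hd'B, hd'new⟩ := exists_bwd C hstart
  by_cases hcyc : ∃ j ≤ C.k, C.v j = A d'
  · left; left
    obtain ⟨j, hj, hvj⟩ := hcyc
    have hj1 : 1 ≤ j := by
      rcases Nat.eq_zero_or_pos j with rfl | h
      · exact absurd (hvj.symm.trans hd'B.symm) hd'M
      · exact h
    refine ⟨⟨j + 1, by omega,
      (fun i => if i = 0 then d' else C.dm (i - 1)),
      (fun i => C.v (if i = 0 then j else i - 1)), ?_, ?_, ?_⟩⟩
    · intro i hi i' hi' h
      have key := C.hvinj _ (by split <;> omega) _ (by split <;> omega) h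
      split_ifs at key <;> omega
    · intro i hi
      by_cases h : i = 0
      · rw [if_pos h, if_pos h]
        exact hvj.symm
      · rw [if_neg h, if_neg h]
        exact C.hA (i - 1) (by omega)
    · intro i hi
      by_cases h : i = 0
      · rw [if_pos h]
        have : (0 + 1) % (j + 1) = 1 := Nat.mod_eq_of_lt (by omega)
        rw [h, this, if_neg (by omega : ¬ (1 : ℕ) = 0)]
        exact hd'B
      · rw [if_neg h]
        by_cases h2 : i = j
        · rw [show (i + 1) % (j + 1) = 0 from by rw [h2]; exact Nat.mod_self _,
            if_pos rfl, C.hB (i - 1) (by omega), show i - 1 + 1 = i from by omega, h2]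
        · rw [show (i + 1) % (j + 1) = i + 1 from Nat.mod_eq_of_lt (by omega),
            if_neg (by omega : ¬ i + 1 = 0), C.hB (i - 1) (by omega),
            show i - 1 + 1 = i from by omega, Nat.add_sub_cancel]
  · right
    refine ⟨⟨C.k + 1, by omega,
      (fun i => if i = 0 then d' else C.dm (i - 1)),
      (fun i => if i = 0 then A d' else C.v (i - 1)), ?_, ?_, ?_⟩, rfl⟩
    · intro i hi i' hi' h
      by_cases h1 : i = 0 <;> by_cases h2 : i' = 0
      · omega
      · rw [if_pos h1, if_neg h2] at h
        exact absurd ⟨i' - 1, by omega, h.symm⟩ hcyc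
      · rw [if_neg h1, if_pos h2] at h
        exact absurd ⟨i - 1, by omega, h⟩ hcyc
      · rw [if_neg h1, if_neg h2] at h
        have := C.hvinj (i - 1) (by omega) (i' - 1) (by omega) h
        omega
    · intro i hi
      by_cases h : i = 0
      · rw [if_pos h, if_pos h]
      · rw [if_neg h, if_neg h]
        exact C.hA (i - 1) (by omega)
    · intro i hi
      rw [if_neg (by omega : ¬ i + 1 = 0)]
      by_cases h : i = 0
      · rw [if_pos h, h]
        simpa using hd'B
      · rw [if_neg h, C.hB (i - 1) (by omega), show i - 1 + 1 = i from by omega,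
          Nat.add_sub_cancel]

lemma extract (hne : ∃ d, A d ≠ B d) : Good A B := by
  obtain ⟨d0, hd0⟩ := hne
  have C0 : Chain A B := by
    refine ⟨1, le_rfl, fun _ => d0, fun i => if i = 0 then A d0 else B d0, ?_, ?_, ?_⟩
    · intro i hi j hj h
      by_cases h1 : i = 0 <;> by_cases h2 : j = 0
      · omega
      · rw [if_pos h1, if_neg h2] at h; exact absurd h hd0
      · rw [if_neg h1, if_pos h2] at h; exact absurd h.symm hd0
      · omega
    · intro i hi
      rw [show i = 0 from by omega, if_pos rfl]
    · intro i hi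
      rw [if_neg (by omega : ¬ i + 1 = 0)]
  clear hd0
  suffices h : ∀ n (C : Chain A B), Fintype.card S ≤ C.k + n → Good A B from
    h (Fintype.card S) C0 (by omega)
  intro n
  induction n with
  | zero =>
    intro C hC
    exact absurd (chain_card C) (by omega)
  | succ n ih =>
    intro C hC
    by_cases h1 : occ B (C.v C.k) ≤ occ A (C.v C.k)
    · rcases step_fwd C h1 with hg | ⟨C', hC'⟩
      · exact hg
      · exact ih C' (by omega)
    · by_cases h2 : occ A (C.v 0) ≤ occ B (C.v 0)
      · rcases step_bwd C h2 with hg | ⟨C', hC'⟩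
        · exact hg
        · exact ih C' (by omega)
      · exact Or.inr ⟨C, by omega, by omega⟩

end Extract

section Main
variable {D S : Type*} [Fintype D] [DecidableEq D] [Fintype S] [DecidableEq S]

lemma p_monotone (c : S → ℕ) (p : S → ℕ → ℤ)
    (hp0 : ∀ s j, j ≤ c s → p s j = 0)
    (hppos : ∀ s j, c s < j → 0 < p s j)
    (hpmono : ∀ s j, c s < j → p s j ≤ p s (j + 1)) (s : S) : Monotone (p s) := by
  apply monotone_nat_of_le_succ
  intro j
  by_cases h : c s < j
  · exact hpmono s j h
  · rw [hp0 s j (by omega)]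
    by_cases h2 : j + 1 ≤ c s
    · rw [hp0 s (j + 1) h2]
    · exact le_of_lt (hppos s (j + 1) (by omega))

lemma cost_eq_costX (CM : D → S → ℤ) (p : S → ℕ → ℤ) (B : D → S) :
    cost CM p B = costX CM p B := rfl

lemma opt_of_no_neg (CM : D → S → ℤ) (c : S → ℕ) (p : S → ℕ → ℤ)
    (hp0 : ∀ s j, j ≤ c s → p s j = 0)
    (hppos : ∀ s j, c s < j → 0 < p s j)
    (hpmono : ∀ s j, c s < j → p s j ≤ p s (j + 1))
    (A : D → S) (hloop : ¬ InducesNegLoop CM p A) :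
    ∀ B : D → S, cost CM p A ≤ cost CM p B := by
  have hpm : ∀ s : S, Monotone (p s) := p_monotone c p hp0 hppos hpmono
  suffices key : ∀ n (B : D → S),
      (Finset.univ.filter fun d => A d ≠ B d).card ≤ n → cost CM p A ≤ cost CM p B from
    fun B => key _ B le_rfl
  intro n
  induction n with
  | zero =>
    intro B hB
    have hall : ∀ d, A d = B d := by
      intro d
      by_contra hc
      have : d ∈ Finset.univ.filter fun d => A d ≠ B d := by
        simp [hc]
      have := Finset.card_pos.mpr ⟨d, this⟩
      omega
    rw [show B = A from (funext hall).symm]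
  | succ n ih =>
    intro B hB
    by_cases hne : ∃ d, A d ≠ B d
    · have hMne : ∀ (C' : D → S) (E : Finset D),
          (∀ d, d ∈ E → C' d = A d) → (∀ d, d ∉ E → C' d = B d) →
          (∃ d0, d0 ∈ E ∧ A d0 ≠ B d0) →
          (Finset.univ.filter fun d => A d ≠ C' d).card ≤ n := by
        intro C' E hIn hOut hex
        obtain ⟨d0, hd0E, hd0⟩ := hex
        have hd0M : d0 ∈ Finset.univ.filter fun d => A d ≠ B d := by simp [hd0]
        have hsub : (Finset.univ.filter fun d => A d ≠ C' d)
            ⊆ (Finset.univ.filter fun d => A d ≠ B d).erase d0 := by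
          intro d hd
          simp only [Finset.mem_filter, Finset.mem_univ, true_and] at hd
          by_cases hdE : d ∈ E
          · exact absurd (hIn d hdE).symm hd
          · rw [Finset.mem_erase]
            refine ⟨fun he => (he ▸ hdE) hd0E, by
              simp only [Finset.mem_filter, Finset.mem_univ, true_and]
              rw [← hOut d hdE]; exact hd⟩
        calc (Finset.univ.filter fun d => A d ≠ C' d).card
            ≤ ((Finset.univ.filter fun d => A d ≠ B d).erase d0).card :=
              Finset.card_le_card hsub
          _ = (Finset.univ.filter fun d => A d ≠ B d).card - 1 :=
              Finset.card_erase_of_mem hd0M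
          _ ≤ n := by omega
      rcases extract hne with ⟨⟨C⟩⟩ | ⟨C, hc0, hck⟩
      · -- cycle case
        have hk1 := C.hk
        have hcost := C.cyc_cost CM p
        have hLC := C.loop_cost CM p
        have hnn : 0 ≤ loopCost CM p A C.loop := by
          by_contra h
          exact hloop ⟨C.loop, C.loop_isLoop, by omega⟩
        have hdm0 : A (C.dm 0) ≠ B (C.dm 0) := by
          rw [C.hA 0 (by omega), C.hB 0 (by omega)]
          intro he
          have := C.hvinj 0 (by omega) (1 % C.k)
            (Nat.mod_lt _ (by omega)) he
          rw [Nat.mod_eq_of_lt (by omega)] at this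
          omega
        have hcard := hMne C.revert C.E
          (fun d hd => by simp [Cyc.revert, hd])
          (fun d hd => by simp [Cyc.revert, hd])
          ⟨C.dm 0, (C.mem_E_iff _).mpr ⟨0, by omega, rfl⟩, hdm0⟩
        have hih := ih C.revert hcard
        rw [cost_eq_costX, cost_eq_costX] at hih ⊢
        rw [hcost]
        linarith [hLC ▸ hnn]
      · -- chain case
        have hk1 := C.hk
        have hcost := C.chain_cost CM p
        have hLC := C.loop_cost CM p
        have hnn : 0 ≤ loopCost CM p A C.loop := by
          by_contra h
          exact hloop ⟨C.loop, C.loop_isLoop, by omega⟩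
        have hdm0 : A (C.dm 0) ≠ B (C.dm 0) := by
          rw [C.hA 0 (by omega), C.hB 0 (by omega)]
          intro he
          have := C.hvinj 0 (by omega) 1 (by omega) he
          omega
        have hcard := hMne C.revert C.E
          (fun d hd => by simp [Chain.revert, hd])
          (fun d hd => by simp [Chain.revert, hd])
          ⟨C.dm 0, (C.mem_E_iff _).mpr ⟨0, by omega, rfl⟩, hdm0⟩
        have hih := ih C.revert hcard
        have hm1 : p (C.v C.k) (occ A (C.v C.k) + 1) ≤ p (C.v C.k) (occ B (C.v C.k)) :=
          hpm _ (by omega)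
        have hm2 : p (C.v 0) (occ B (C.v 0) + 1) ≤ p (C.v 0) (occ A (C.v 0)) :=
          hpm _ (by omega)
        rw [cost_eq_costX, cost_eq_costX] at hih ⊢
        rw [hcost]
        rw [hLC] at hnn
        linarith
    · push_neg at hne
      rw [show B = A from (funext hne).symm]

lemma no_neg_of_opt (CM : D → S → ℤ) (p : S → ℕ → ℤ) (A : D → S)
    (hopt : ∀ B : D → S, cost CM p A ≤ cost CM p B) :
    ¬ InducesNegLoop CM p A := by
  rintro ⟨L, hIs, hneg⟩
  obtain ⟨hm2, hinj, hA3, hinj4, hnone5⟩ := hIs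
  have hm0 : 0 < L.m := by omega
  set B := removeLoop A L with hBdef
  by_cases hex : ∃ t0 : Fin L.m, L.dem t0 = none
  · -- type (ii): one penalty edge
    obtain ⟨t0, ht0⟩ := hex
    set k := L.m - 1 with hkdef
    have hk1 : 1 ≤ k := by omega
    set e : ℕ → Fin L.m := fun i => ⟨(t0.val + 1 + i) % L.m, Nat.mod_lt _ hm0⟩ with he
    have he_val : ∀ i, (e i).val = (t0.val + 1 + i) % L.m := fun i => rfl
    have he_inj : ∀ i ≤ k, ∀ j ≤ k, e i = e j → i = j := by
      intro i hi j hj h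
      have h1 : (t0.val + 1 + i) % L.m = (t0.val + 1 + j) % L.m := by
        rw [← he_val i, ← he_val j, h]
      have h2 : i % L.m = j % L.m :=
        Nat.ModEq.add_left_cancel' (t0.val + 1) (by
          show (t0.val + 1 + i) % L.m = (t0.val + 1 + j) % L.m
          exact h1)
      rw [Nat.mod_eq_of_lt (by omega), Nat.mod_eq_of_lt (by omega)] at h2
      exact h2
    have he_t0 : e k = t0 := by
      apply Fin.ext
      rw [he_val, show t0.val + 1 + k = t0.val + L.m from by omega,
        Nat.add_mod_right, Nat.mod_eq_of_lt t0.isLt]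
    have he_surj : ∀ t : Fin L.m, ∃ i < L.m, e i = t := by
      intro t
      refine ⟨(t.val + L.m - (t0.val + 1)) % L.m, Nat.mod_lt _ hm0, ?_⟩
      apply Fin.ext
      rw [he_val, Nat.add_mod_mod,
        show t0.val + 1 + (t.val + L.m - (t0.val + 1)) = t.val + L.m from by
          have := t0.isLt; omega,
        Nat.add_mod_right, Nat.mod_eq_of_lt t.isLt]
    have hsome : ∀ i < k, ∃ d, L.dem (e i) = some d := by
      intro i hi
      cases h : L.dem (e i) with
      | none =>
        have := hnone5 (e i) t0 h ht0
        have h2 := he_inj i (by omega) k le_rfl (this.trans he_t0.symm)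
        omega
      | some d => exact ⟨d, rfl⟩
    haveI : Nonempty D := ⟨(hsome 0 (by omega)).choose⟩
    set dm : ℕ → D := fun i =>
      if h : ∃ d, L.dem (e i) = some d then h.choose else Classical.arbitrary D with hdm
    have hdm_spec : ∀ i < k, L.dem (e i) = some (dm i) := by
      intro i hi
      rw [hdm]
      dsimp only
      rw [dif_pos (hsome i hi)]
      exact (hsome i hi).choose_spec
    have hBe : ∀ i < k, B (dm i) = L.vtx (cnext (e i)) := by
      intro i hi
      have hex2 : ∃ t', L.dem t' = some (dm i) := ⟨e i, hdm_spec i hi⟩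
      rw [hBdef]
      show (if h : ∃ t', L.dem t' = some (dm i) then L.vtx (cnext (Classical.choose h))
        else A (dm i)) = _
      rw [dif_pos hex2, hinj4 _ (e i) _ (Classical.choose_spec hex2) (hdm_spec i hi)]
    have hcne : ∀ i, cnext (e i) = e (i + 1) := by
      intro i
      apply Fin.ext
      show ((t0.val + 1 + i) % L.m + 1) % L.m = (t0.val + 1 + (i + 1)) % L.m
      rw [Nat.mod_add_mod, show t0.val + 1 + i + 1 = t0.val + 1 + (i + 1) from by omega]
    have hCex : ∃ C : Chain A B, C.k = k ∧ (∀ i, C.dm i = dm i)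
        ∧ (∀ i, C.v i = L.vtx (e i)) := by
      refine ⟨⟨k, hk1, dm, fun i => L.vtx (e i), ?_, ?_, ?_⟩, rfl, fun _ => rfl, fun _ => rfl⟩
      · intro i hi j hj h
        exact he_inj i hi j hj (hinj h)
      · intro i hi
        exact hA3 _ _ (hdm_spec i hi)
      · intro i hi
        rw [hBe i hi, hcne i]
    obtain ⟨C, hCk, hCdm, hCv⟩ := hCex
    have hrev : C.revert = A := by
      funext d
      show (if d ∈ C.E then A d else B d) = A d
      split_ifs with hd
      · rfl
      · by_cases hex2 : ∃ t, L.dem t = some d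
        · exfalso
          obtain ⟨t, ht⟩ := hex2
          have htne : t ≠ t0 := by
            intro hc
            rw [hc, ht0] at ht
            cases ht
          obtain ⟨i, him, hei⟩ := he_surj t
          have hik : i < k := by
            by_contra hik
            have : i = k := by omega
            rw [this, he_t0] at hei
            exact htne hei.symm
          apply hd
          refine (C.mem_E_iff d).mpr ⟨i, by omega, ?_⟩
          rw [hCdm i]
          have h1 := hdm_spec i hik
          rw [hei, ht] at h1
          exact (Option.some_inj.mp h1).symm
        · rw [hBdef]
          show (if h : ∃ t, L.dem t = some d then L.vtx (cnext (Classical.choose h))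
            else A d) = A d
          rw [dif_neg hex2]
    have hvk : occ B (C.v C.k) = occ A (C.v C.k) + 1 := by
      have h := C.occ_revert_vk
      rw [hrev] at h
      exact h
    have hv0 : occ A (C.v 0) = occ B (C.v 0) + 1 := by
      have h := C.occ_revert_v0
      rw [hrev] at h
      exact h
    have hcost := C.chain_cost CM p
    rw [hrev] at hcost
    have hLL : loopCost CM p A L
        = (∑ i ∈ Finset.range C.k, (CM (C.dm i) (C.v (i + 1)) - CM (C.dm i) (C.v i)))
          + (p (C.v C.k) (occ A (C.v C.k) + 1) - p (C.v 0) (occ A (C.v 0))) := by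
      unfold loopCost
      have hsum : ∑ t : Fin L.m, edgeWt CM p A L t
          = ∑ i ∈ Finset.range L.m, edgeWt CM p A L (e i) := by
        refine (Finset.sum_bij (fun i _ => e i) (fun i _ => Finset.mem_univ _) ?_ ?_ ?_).symm
        · intro i hi j hj h
          exact he_inj i (by have := Finset.mem_range.mp hi; omega)
            j (by have := Finset.mem_range.mp hj; omega) h
        · intro t _
          obtain ⟨i, him, hei⟩ := he_surj t
          exact ⟨i, Finset.mem_range.mpr him, hei⟩
        · intro i hi
          rfl
      rw [hsum, show L.m = k + 1 from by omega, Finset.sum_range_succ]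
      congr 1
      · rw [hCk]
        apply Finset.sum_congr rfl
        intro i hi
        have hik := Finset.mem_range.mp hi
        rw [edgeWt_some CM p A L (e i) (dm i) (hdm_spec i hik), hcne i,
          hCdm i, hCv i, hCv (i + 1)]
      · rw [he_t0, edgeWt_none CM p A L t0 ht0]
        have h1 : L.vtx t0 = C.v C.k := by rw [hCv C.k, hCk, he_t0]
        have h2 : L.vtx (cnext t0) = C.v 0 := by
          rw [hCv 0]
          congr 1
        rw [show wpen p A (L.vtx t0) (L.vtx (cnext t0))
            = p (L.vtx t0) (occ A (L.vtx t0) + 1) - p (L.vtx (cnext t0)) (occ A (L.vtx (cnext t0))) from rfl,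
          h1, h2]
    have hfin := hopt B
    rw [cost_eq_costX, cost_eq_costX] at hfin
    rw [hvk, ← hv0] at hcost
    rw [hLL] at hneg
    rw [hcost] at hfin
    linarith
  · -- type (i): all transfer edges
    have hsome : ∀ t : Fin L.m, ∃ d, L.dem t = some d := by
      intro t
      cases h : L.dem t with
      | none => exact absurd ⟨t, h⟩ hex
      | some d => exact ⟨d, rfl⟩
    choose f hf using hsome
    have hBf : ∀ t, B (f t) = L.vtx (cnext t) := by
      intro t
      have hex2 : ∃ t', L.dem t' = some (f t) := ⟨t, hf t⟩
      rw [hBdef]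
      show (if h : ∃ t', L.dem t' = some (f t) then L.vtx (cnext (Classical.choose h))
        else A (f t)) = _
      rw [dif_pos hex2, hinj4 _ t _ (Classical.choose_spec hex2) (hf t)]
    have hCex : ∃ C : Cyc A B, C.k = L.m
        ∧ (∀ i, C.dm i = f ⟨i % L.m, Nat.mod_lt _ hm0⟩)
        ∧ (∀ i, C.v i = L.vtx ⟨i % L.m, Nat.mod_lt _ hm0⟩) := by
      refine ⟨⟨L.m, hm2, fun i => f ⟨i % L.m, Nat.mod_lt _ hm0⟩,
        fun i => L.vtx ⟨i % L.m, Nat.mod_lt _ hm0⟩, ?_, ?_, ?_⟩, rfl, fun _ => rfl, fun _ => rfl⟩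
      · intro i hi j hj h
        have h2 := congrArg Fin.val (hinj h)
        simp only at h2
        rw [Nat.mod_eq_of_lt hi, Nat.mod_eq_of_lt hj] at h2
        exact h2
      · intro i hi
        exact hA3 _ _ (hf _)
      · intro i hi
        rw [hBf ⟨i % L.m, Nat.mod_lt _ hm0⟩]
        congr 1
        apply Fin.ext
        show (i % L.m + 1) % L.m = (i + 1) % L.m % L.m
        conv_rhs => rw [Nat.mod_eq_of_lt (Nat.mod_lt _ hm0)]
        rw [Nat.mod_add_mod]
    obtain ⟨C, hCk, hCdm, hCv⟩ := hCex
    have hrev : C.revert = A := by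
      funext d
      show (if d ∈ C.E then A d else B d) = A d
      split_ifs with hd
      · rfl
      · by_cases hex2 : ∃ t, L.dem t = some d
        · exfalso
          obtain ⟨t, ht⟩ := hex2
          apply hd
          refine (C.mem_E_iff d).mpr ⟨t.val, by omega, ?_⟩
          rw [hCdm t.val]
          have h1 : (⟨t.val % L.m, Nat.mod_lt _ hm0⟩ : Fin L.m) = t :=
            Fin.ext (Nat.mod_eq_of_lt t.isLt)
          rw [h1]
          have h2 := hf t
          rw [ht] at h2
          exact (Option.some_inj.mp h2).symm
        · rw [hBdef]
          show (if h : ∃ t, L.dem t = some d then L.vtx (cnext (Classical.choose h))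
            else A d) = A d
          rw [dif_neg hex2]
    have hcost := C.cyc_cost CM p
    rw [hrev] at hcost
    have hLL : loopCost CM p A L
        = ∑ i ∈ Finset.range C.k, (CM (C.dm i) (C.v ((i + 1) % C.k)) - CM (C.dm i) (C.v i)) := by
      unfold loopCost
      set g : ℕ → ℤ := fun i => edgeWt CM p A L ⟨i % L.m, Nat.mod_lt _ hm0⟩ with hg
      have h1 : ∀ t : Fin L.m, edgeWt CM p A L t = g t.val := by
        intro t
        rw [hg]
        dsimp only
        congr 1
        exact (Fin.ext (Nat.mod_eq_of_lt t.isLt)).symm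
      rw [Finset.sum_congr rfl (fun t _ => h1 t), Fin.sum_univ_eq_sum_range g L.m, hCk]
      apply Finset.sum_congr rfl
      intro i hi
      have hil := Finset.mem_range.mp hi
      rw [hg]
      dsimp only
      rw [edgeWt_some CM p A L _ _ (hf ⟨i % L.m, Nat.mod_lt _ hm0⟩),
        hCdm i, hCv ((i + 1) % L.m), hCv i]
      have hcn : cnext (⟨i % L.m, Nat.mod_lt _ hm0⟩ : Fin L.m)
          = ⟨(i + 1) % L.m % L.m, Nat.mod_lt _ hm0⟩ := by
        apply Fin.ext
        show (i % L.m + 1) % L.m = (i + 1) % L.m % L.m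
        conv_rhs => rw [Nat.mod_eq_of_lt (Nat.mod_lt _ hm0)]
        rw [Nat.mod_add_mod]
      rw [hcn]
    have hfin := hopt B
    rw [cost_eq_costX, cost_eq_costX] at hfin
    rw [hLL] at hneg
    rw [hcost] at hfin
    linarith

end Main



/-- An allotment `A` of an LBDD instance is optimal if and only if
`A` does not induce any negative loop. -/
theorem optimal_iff_no_negative_loop
    (D S : Type) [Fintype D] [DecidableEq D] [Fintype S] [DecidableEq S]
    (CM : D → S → ℤ) (c : S → ℕ) (p : S → ℕ → ℤ)
    (hp0 : ∀ s j, j ≤ c s → p s j = 0)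
    (hppos : ∀ s j, c s < j → 0 < p s j)
    (hpmono : ∀ s j, c s < j → p s j ≤ p s (j + 1))
    (A : D → S) :
    (∀ B : D → S, cost CM p A ≤ cost CM p B) ↔ ¬ InducesNegLoop CM p A :=
  ⟨fun hopt => no_neg_of_opt CM p A hopt,
   fun hnoneg => opt_of_no_neg CM c p hp0 hppos hpmono A hnoneg⟩
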